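/- For the mechanism 𝓔_i with conditional probabilities p_{Y|X}(y|x) = p_Y(y)·e^{-ε·d(x,y)} / (p_X(x)·(1+(m-1)e^{-ε})^n), where p_Y is chosen so that Σ_y p_{X|Y}(x|y) p_Y(y) = p_X(x) (assumed to exist), the posterior equals p_{X|Y}(x|y) = e^{-ε·d(x,y)}/(1+(m-1)e^{-ε})^n, so 𝓔_i satisfies ε-identifiability and has distortion E[d(X,Y)] = h(ε). -/

import Mathlib

open Finset

private lemma sum_ite_fin {m : ℕ} (c1 c2 : ℝ) (b : Fin m) :
    ∑ a : Fin m, (if a = b then c1 else c2) = c1 + ((m:ℝ) - 1) * c2 := by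
  have h : ∀ a : Fin m, (if a = b then c1 else c2) = c2 + (if a = b then c1 - c2 else 0) := by
    intro a; by_cases h : a = b <;> simp [h]
  simp only [h, Finset.sum_add_distrib, Finset.sum_const, Finset.sum_ite_eq',
    Finset.mem_univ, if_true, Finset.card_univ, Fintype.card_fin, nsmul_eq_mul]
  ring

private lemma exp_hamming_prod {n m : ℕ} (ε : ℝ) (x y : Fin n → Fin m) :
    Real.exp (-ε * (hammingDist x y : ℝ))
      = ∏ i, (if x i = y i then (1:ℝ) else Real.exp (-ε)) := by
  have hd : (hammingDist x y : ℝ) = ∑ i, (if x i = y i then (0:ℝ) else 1) := by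
    rw [hammingDist, Finset.card_filter]
    push_cast
    congr 1
    ext i
    by_cases h : x i = y i <;> simp [h]
  rw [hd, Finset.mul_sum, Real.exp_sum]
  refine Finset.prod_congr rfl fun i _ => ?_
  by_cases h : x i = y i <;> simp [h]

private lemma sum_exp_hamming {n m : ℕ} (ε : ℝ) (y : Fin n → Fin m) :
    ∑ x : Fin n → Fin m, Real.exp (-ε * (hammingDist x y : ℝ))
      = (1 + ((m:ℝ) - 1) * Real.exp (-ε)) ^ n := by
  simp_rw [exp_hamming_prod]
  rw [← Fintype.piFinset_univ,
    Finset.sum_prod_piFinset univ (fun i a => if a = y i then (1:ℝ) else Real.exp (-ε))]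
  simp_rw [fun i => sum_ite_fin 1 (Real.exp (-ε)) (y i)]
  rw [Finset.prod_const, Finset.card_univ, Fintype.card_fin]

private lemma sum_exp_hamming_mul {n m : ℕ} (ε : ℝ) (y : Fin n → Fin m) :
    ∑ x : Fin n → Fin m, Real.exp (-ε * (hammingDist x y : ℝ)) * (hammingDist x y : ℝ)
      = (n : ℝ) * (((m:ℝ) - 1) * Real.exp (-ε))
          * (1 + ((m:ℝ) - 1) * Real.exp (-ε)) ^ (n - 1) := by
  set t := Real.exp (-ε) with ht
  have hterm : ∀ x : Fin n → Fin m,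
      Real.exp (-ε * (hammingDist x y : ℝ)) * (hammingDist x y : ℝ)
        = ∑ i, ∏ j, (if j = i then (if x j = y j then (0:ℝ) else t)
            else (if x j = y j then (1:ℝ) else t)) := by
    intro x
    have hd : (hammingDist x y : ℝ) = ∑ i, (if x i = y i then (0:ℝ) else 1) := by
      rw [hammingDist, Finset.card_filter]
      push_cast
      congr 1
      ext i
      by_cases h : x i = y i <;> simp [h]
    rw [exp_hamming_prod, hd, Finset.mul_sum]
    refine Finset.sum_congr rfl fun i _ => ?_
    rw [← Finset.prod_erase_mul univ _ (Finset.mem_univ i),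
        ← Finset.prod_erase_mul univ _ (Finset.mem_univ i), mul_assoc]
    congr 1
    · exact Finset.prod_congr rfl fun j hj => by
        rw [if_neg (Finset.ne_of_mem_erase hj)]
    · by_cases h : x i = y i <;> simp [h, ht]
  simp_rw [hterm]
  rw [Finset.sum_comm]
  have hinner : ∀ i : Fin n,
      (∑ x : Fin n → Fin m, ∏ j, (if j = i then (if x j = y j then (0:ℝ) else t)
        else (if x j = y j then (1:ℝ) else t)))
      = (((m:ℝ) - 1) * t) * (1 + ((m:ℝ) - 1) * t) ^ (n - 1) := by
    intro i
    rw [← Fintype.piFinset_univ,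
      Finset.sum_prod_piFinset univ (fun j a => if j = i then (if a = y j then (0:ℝ) else t)
        else (if a = y j then (1:ℝ) else t))]
    have hcol : ∀ j : Fin n,
        (∑ a : Fin m, (if j = i then (if a = y j then (0:ℝ) else t)
          else (if a = y j then (1:ℝ) else t)))
        = (if j = i then ((m:ℝ) - 1) * t else 1 + ((m:ℝ) - 1) * t) := by
      intro j
      by_cases h : j = i
      · simp only [h, if_true]
        rw [sum_ite_fin 0 t (y i)]; ring
      · simp only [h, if_false]
        exact sum_ite_fin 1 t (y j)
    simp_rw [hcol]
    rw [← Finset.prod_erase_mul univ _ (Finset.mem_univ i), if_pos rfl]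
    rw [Finset.prod_congr rfl (fun j hj => if_neg (Finset.ne_of_mem_erase hj)),
      Finset.prod_const, Finset.card_erase_of_mem (Finset.mem_univ i),
      Finset.card_univ, Fintype.card_fin, mul_comm]
  simp_rw [hinner]
  rw [Finset.sum_const, Finset.card_univ, Fintype.card_fin, nsmul_eq_mul]
  ring

/-- The mechanism `𝓔_i` with `p_{Y|X}(y|x) = p_Y(y) e^{-ε d(x,y)}/(p_X(x)(1+(m-1)e^{-ε})^n)`,
where `p_Y` is a pmf satisfying the consistency condition, has Bayes posterior
`p_{X|Y}(x|y) = e^{-ε d(x,y)}/(1+(m-1)e^{-ε})^n`; hence it satisfies `ε`-identifiability and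
its distortion equals `h(ε) = n/(1+e^ε/(m-1))`. -/
theorem identifiability_optimal_mechanism (n m : ℕ) (hm : 2 ≤ m) (ε : ℝ) (hε : 0 ≤ ε)
    (pX pY : (Fin n → Fin m) → ℝ)
    (hpXpos : ∀ x, 0 < pX x) (hpXsum : ∑ x, pX x = 1)
    (hpYnn : ∀ y, 0 ≤ pY y) (hpYsum : ∑ y, pY y = 1)
    (hcons : ∀ x, ∑ y, Real.exp (-ε * (hammingDist x y : ℝ))
        / (1 + ((m : ℝ) - 1) * Real.exp (-ε)) ^ n * pY y = pX x)
    (pYX : (Fin n → Fin m) → (Fin n → Fin m) → ℝ)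
    (hmech : ∀ x y, pYX y x = pY y * Real.exp (-ε * (hammingDist x y : ℝ))
        / (pX x * (1 + ((m : ℝ) - 1) * Real.exp (-ε)) ^ n)) :
    (∀ x y : Fin n → Fin m, 0 < pY y →
      pX x * pYX y x / (∑ x'', pX x'' * pYX y x'')
        = Real.exp (-ε * (hammingDist x y : ℝ)) / (1 + ((m : ℝ) - 1) * Real.exp (-ε)) ^ n) ∧
    (∀ x x' y : Fin n → Fin m, hammingDist x x' = 1 →
      pX x * pYX y x / (∑ x'', pX x'' * pYX y x'')
        ≤ Real.exp ε * (pX x' * pYX y x' / (∑ x'', pX x'' * pYX y x''))) ∧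
    (∑ x : Fin n → Fin m, ∑ y : Fin n → Fin m,
        pX x * pYX y x * (hammingDist x y : ℝ))
      = (n : ℝ) / (1 + Real.exp ε / ((m : ℝ) - 1)) := by
  have hm1 : (1:ℝ) ≤ (m:ℝ) - 1 := by
    have : (2:ℝ) ≤ (m:ℝ) := by exact_mod_cast hm
    linarith
  have htpos : 0 < Real.exp (-ε) := Real.exp_pos _
  have hb : 0 < 1 + ((m:ℝ) - 1) * Real.exp (-ε) := by nlinarith
  have hC : 0 < (1 + ((m:ℝ) - 1) * Real.exp (-ε)) ^ n := pow_pos hb n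
  have hnum : ∀ x y : Fin n → Fin m, pX x * pYX y x
      = pY y * (Real.exp (-ε * (hammingDist x y : ℝ))
          / (1 + ((m:ℝ) - 1) * Real.exp (-ε)) ^ n) := by
    intro x y
    rw [hmech]
    field_simp [(hpXpos x).ne']
  have hden : ∀ y : Fin n → Fin m, (∑ x'', pX x'' * pYX y x'') = pY y := by
    intro y
    simp_rw [hnum]
    rw [← Finset.mul_sum, ← Finset.sum_div, sum_exp_hamming, div_self hC.ne', mul_one]
  have hpost : ∀ x y : Fin n → Fin m, 0 < pY y →
      pX x * pYX y x / (∑ x'', pX x'' * pYX y x'')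
        = Real.exp (-ε * (hammingDist x y : ℝ))
            / (1 + ((m:ℝ) - 1) * Real.exp (-ε)) ^ n := by
    intro x y hy
    rw [hden, hnum, mul_comm, mul_div_assoc, div_self hy.ne', mul_one]
  refine ⟨hpost, ?_, ?_⟩
  · intro x x' y hxx'
    rcases eq_or_lt_of_le (hpYnn y) with hy | hy
    · rw [hden, ← hy]
      simp
    · rw [hpost x y hy, hpost x' y hy, ← mul_div_assoc]
      refine div_le_div_of_nonneg_right ?_ hC.le
      rw [← Real.exp_add, Real.exp_le_exp]
      have htri : (hammingDist x' y : ℝ) ≤ 1 + (hammingDist x y : ℝ) := by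
        have := hammingDist_triangle x' x y
        rw [hammingDist_comm x' x, hxx'] at this
        exact_mod_cast this
      nlinarith
  · have hterm : ∀ x y : Fin n → Fin m,
        pX x * pYX y x * (hammingDist x y : ℝ)
          = pY y * (Real.exp (-ε * (hammingDist x y : ℝ)) * (hammingDist x y : ℝ)
              / (1 + ((m:ℝ) - 1) * Real.exp (-ε)) ^ n) := by
      intro x y; rw [hnum]; ring
    simp_rw [hterm]
    rw [Finset.sum_comm]
    have hy : ∀ y : Fin n → Fin m,
        (∑ x : Fin n → Fin m, pY y * (Real.exp (-ε * (hammingDist x y : ℝ))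
            * (hammingDist x y : ℝ) / (1 + ((m:ℝ) - 1) * Real.exp (-ε)) ^ n))
        = pY y * ((n : ℝ) * (((m:ℝ) - 1) * Real.exp (-ε))
            * (1 + ((m:ℝ) - 1) * Real.exp (-ε)) ^ (n - 1)
            / (1 + ((m:ℝ) - 1) * Real.exp (-ε)) ^ n) := by
      intro y
      rw [← Finset.mul_sum, ← Finset.sum_div, sum_exp_hamming_mul]
    simp_rw [hy]
    rw [← Finset.sum_mul, hpYsum, one_mul]
    have hm0 : ((m:ℝ) - 1) ≠ 0 := by linarith
    have heps : Real.exp ε = (Real.exp (-ε))⁻¹ := by rw [← Real.exp_neg, neg_neg]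
    have hden2 : 0 < 1 + Real.exp ε / ((m:ℝ) - 1) := by
      have h3 : 0 < Real.exp ε / ((m:ℝ) - 1) := div_pos (Real.exp_pos ε) (by linarith)
      linarith
    rcases Nat.eq_zero_or_pos n with hn | hn
    · subst hn
      simp
    · obtain ⟨k, rfl⟩ : ∃ k, n = k + 1 := ⟨n - 1, (Nat.succ_pred_eq_of_pos hn).symm⟩
      have hCk : (0:ℝ) < (1 + ((m:ℝ) - 1) * Real.exp (-ε)) ^ k := pow_pos hb k
      rw [Nat.add_sub_cancel, pow_succ, heps] at *
      rw [div_eq_div_iff (by positivity) hden2.ne']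
      field_simp
      ring
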